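/- arXiv:1704.02668 — 3 statements merged into one kernel-verified Lean document; each statement's English description precedes it below -/
import Mathlib

section
/- Let O be a discrete valuation ring with maximal ideal 𝔪, uniformizer π, and finite residue field of cardinality q. Let M ⊆ Mat_{d×e}(O) be an O-submodule and let π^m M = {π^m a : a ∈ M}. For an integer n, let N_n denote the image of a submodule N ⊆ Mat_{d×e}(O) under entrywise reduction into Mat_{d×e}(O/𝔪^n). Then for all n ≥ m ≥ 0, ask((π^m M)_n) = q^{d m} · ask(M_{n-m}). -/
/-- The average size of the kernel of the elements of a set `N` of `m × n` matrices
over a commutative ring `S`, where matrices act on row vectors by right multiplication. -/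
noncomputable def ask {S : Type*} [CommRing S] {m n : Type*} [Fintype m]
    (N : Set (Matrix m n S)) : ℚ :=
  (Nat.card N : ℚ)⁻¹ *
    ∑ᶠ a : N, (Nat.card {x : m → S | Matrix.vecMul x (a : Matrix m n S) = 0} : ℚ)

/-- The image of a set of matrices over `R` under entrywise reduction modulo an ideal `c`. -/
def reduceMod {R : Type*} [CommRing R] {d e : ℕ}
    (N : Set (Matrix (Fin d) (Fin e) R)) (c : Ideal R) :
    Set (Matrix (Fin d) (Fin e) (R ⧸ c)) :=
  (fun A : Matrix (Fin d) (Fin e) R => A.map (Ideal.Quotient.mk c)) '' N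

open Function Set

section Preimage

variable {G H : Type*} [AddCommGroup G] [AddCommGroup H]

/-- For a surjective additive hom, the preimage of a set is equivalent to the
product of the set with the kernel. -/
noncomputable def preimageEquivProd (f : G →+ H) (hf : Surjective f) (S : Set H) :
    (⇑f ⁻¹' S) ≃ S × {x : G // f x = 0} := by
  classical
  have hsec : ∀ y, f (surjInv hf y) = y := surjInv_eq hf
  exact
  { toFun := fun x => (⟨f x.1, x.2⟩, ⟨x.1 - surjInv hf (f x.1), by simp [hsec]⟩)
    invFun := fun yk => ⟨surjInv hf yk.1.1 + yk.2.1, by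
      simp only [Set.mem_preimage, map_add, hsec, yk.2.2, add_zero]; exact yk.1.2⟩
    left_inv := fun x => by ext; simp
    right_inv := fun yk => by
      obtain ⟨⟨y, hy⟩, ⟨k, hk⟩⟩ := yk
      have h1 : f (surjInv hf y + k) = y := by simp [hsec, hk]
      ext
      · simp [h1]
      · simp [h1] }

theorem card_preimage (f : G →+ H) (hf : Surjective f) (S : Set H) :
    Nat.card (⇑f ⁻¹' S) = Nat.card S * Nat.card {x : G // f x = 0} := by
  rw [Nat.card_congr (preimageEquivProd f hf S), Nat.card_prod]

end Preimage

section DVR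

variable {O : Type*} [CommRing O] [IsDomain O] [IsDiscreteValuationRing O]
  (π : O) (hπ : Irreducible π)

local notation "𝔪" => IsLocalRing.maximalIdeal O

include hπ in
theorem mem_mpow_iff (k : ℕ) (x : O) : x ∈ 𝔪 ^ k ↔ π ^ k ∣ x := by
  rw [(IsDiscreteValuationRing.irreducible_iff_uniformizer π).mp hπ,
    Ideal.span_singleton_pow, Ideal.mem_span_singleton]

omit [IsDomain O] [IsDiscreteValuationRing O] in
theorem factor_surjective {I J : Ideal O} (h : I ≤ J) :
    Surjective (Ideal.Quotient.factor h) := by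
  intro y
  obtain ⟨r, rfl⟩ := Ideal.Quotient.mk_surjective y
  exact ⟨Ideal.Quotient.mk I r, Ideal.Quotient.factor_mk h r⟩

/-- The scaled quotient map `x ↦ π^j x mod 𝔪^k`. -/
noncomputable def smulQ (j k : ℕ) : O →ₗ[O] O ⧸ (𝔪 ^ k) :=
  π ^ j • (𝔪 ^ k).mkQ

theorem smulQ_apply (j k : ℕ) (x : O) :
    smulQ π j k x = Ideal.Quotient.mk (𝔪 ^ k) (π ^ j * x) := by
  simp only [smulQ, LinearMap.smul_apply, Submodule.mkQ_apply,
    Ideal.Quotient.mk_eq_mk]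
  rw [Algebra.smul_def, Ideal.Quotient.algebraMap_eq, ← map_mul]

include hπ in
theorem ker_smulQ (k : ℕ) : LinearMap.ker (smulQ π k (k + 1)) = 𝔪 := by
  ext x
  rw [LinearMap.mem_ker, smulQ_apply, Ideal.Quotient.eq_zero_iff_mem]
  rw [mem_mpow_iff π hπ, pow_succ, mul_comm (π ^ k) π, mul_comm (π ^ k) x,
    mul_dvd_mul_iff_right (pow_ne_zero k hπ.ne_zero)]
  simpa using (mem_mpow_iff π hπ 1 x).symm

include hπ in
theorem range_smulQ (k : ℕ) :
    (LinearMap.range (smulQ π k (k + 1)) : Set (O ⧸ (𝔪 ^ (k + 1)))) =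
      {x | Ideal.Quotient.factor (Ideal.pow_le_pow_right k.le_succ) x = 0} := by
  ext x
  simp only [SetLike.mem_coe, LinearMap.mem_range, mem_setOf_eq]
  constructor
  · rintro ⟨y, rfl⟩
    rw [smulQ_apply, Ideal.Quotient.factor_mk, Ideal.Quotient.eq_zero_iff_mem]
    exact (mem_mpow_iff π hπ k _).mpr ⟨y, rfl⟩
  · intro hx
    obtain ⟨y, rfl⟩ := Ideal.Quotient.mk_surjective x
    rw [Ideal.Quotient.factor_mk, Ideal.Quotient.eq_zero_iff_mem, mem_mpow_iff π hπ] at hx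
    obtain ⟨c, rfl⟩ := hx
    exact ⟨c, smulQ_apply π k (k + 1) c⟩

/-- The residue field is equivalent to the range of `smulQ π k (k+1)`. -/
noncomputable def stepEquiv (k : ℕ) :
    IsLocalRing.ResidueField O ≃ₗ[O] LinearMap.range (smulQ π k (k + 1)) :=
  (Submodule.quotEquivOfEq _ _ (ker_smulQ π hπ k).symm).trans
    (smulQ π k (k + 1)).quotKerEquivRange

variable [Finite (IsLocalRing.ResidueField O)]

include hπ in
theorem finite_and_card_quot (k : ℕ) :
    Finite (O ⧸ (𝔪 ^ k)) ∧
      Nat.card (O ⧸ (𝔪 ^ k)) = Nat.card (IsLocalRing.ResidueField O) ^ k := by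
  induction k with
  | zero =>
    haveI hs : Subsingleton (O ⧸ (𝔪 ^ 0)) := by
      rw [pow_zero, Ideal.one_eq_top]
      exact Ideal.Quotient.subsingleton_iff.mpr rfl
    exact ⟨Finite.of_subsingleton, by rw [Nat.card_unique, pow_zero]⟩
  | succ k ih =>
    obtain ⟨ihF, ihC⟩ := ih
    set ρ := Ideal.Quotient.factor (S := 𝔪 ^ (k + 1)) (T := 𝔪 ^ k)
      (Ideal.pow_le_pow_right k.le_succ) with hρ
    let f : (O ⧸ (𝔪 ^ (k + 1))) →+ (O ⧸ (𝔪 ^ k)) := ρ.toAddMonoidHom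
    have hf : Surjective ⇑f := factor_surjective (Ideal.pow_le_pow_right k.le_succ)
    have hkerE : IsLocalRing.ResidueField O ≃ {x : O ⧸ (𝔪 ^ (k + 1)) // f x = 0} :=
      (stepEquiv π hπ k).toEquiv.trans (Equiv.setCongr (range_smulQ π hπ k))
    have hkerF : Finite {x : O ⧸ (𝔪 ^ (k + 1)) // f x = 0} := Finite.of_equiv _ hkerE
    have hkerC : Nat.card {x : O ⧸ (𝔪 ^ (k + 1)) // f x = 0} =
        Nat.card (IsLocalRing.ResidueField O) := (Nat.card_congr hkerE).symm
    have e : O ⧸ (𝔪 ^ (k + 1)) ≃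
        ↥(univ : Set (O ⧸ (𝔪 ^ k))) × {x : O ⧸ (𝔪 ^ (k + 1)) // f x = 0} :=
      ((Equiv.Set.univ _).symm.trans
        (Equiv.setCongr (preimage_univ (f := ⇑f)).symm)).trans
        (preimageEquivProd f hf univ)
    refine ⟨Finite.of_equiv _ e.symm, ?_⟩
    rw [Nat.card_congr e, Nat.card_prod, Nat.card_univ, ihC, hkerC, pow_succ]

include hπ in
theorem finite_quot (k : ℕ) : Finite (O ⧸ (𝔪 ^ k)) :=
  (finite_and_card_quot π hπ k).1

include hπ in
theorem card_ker_factor {q : ℕ} (hq : Nat.card (IsLocalRing.ResidueField O) = q)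
    (m n : ℕ) (hmn : m ≤ n) :
    Nat.card {x : O ⧸ (𝔪 ^ n) //
        Ideal.Quotient.factor (Ideal.pow_le_pow_right (n.sub_le m)) x = 0} = q ^ m := by
  set ρ := Ideal.Quotient.factor (S := 𝔪 ^ n) (T := 𝔪 ^ (n - m))
    (Ideal.pow_le_pow_right (n.sub_le m)) with hρ
  have hf : Surjective ⇑ρ.toAddMonoidHom :=
    factor_surjective (Ideal.pow_le_pow_right (n.sub_le m))
  have h1 := card_preimage ρ.toAddMonoidHom hf univ
  rw [preimage_univ, Nat.card_univ, Nat.card_univ,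
    (finite_and_card_quot π hπ n).2, (finite_and_card_quot π hπ (n - m)).2, hq] at h1
  have hqpos : 0 < q := by
    rw [← hq]; exact Nat.card_pos
  have h2 : q ^ n = q ^ (n - m) * q ^ m := by
    rw [← pow_add, Nat.sub_add_cancel hmn]
  rw [h2] at h1
  exact (Nat.eq_of_mul_eq_mul_left (pow_pos hqpos (n - m)) h1.symm)

/-- The injective map `O/𝔪^(n-m) → O/𝔪^n` given by multiplication by `π^m`. -/
noncomputable def mun (m n : ℕ) (hmn : m ≤ n) : (O ⧸ (𝔪 ^ (n - m))) →ₗ[O] O ⧸ (𝔪 ^ n) :=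
  Submodule.liftQ (𝔪 ^ (n - m)) (smulQ π m n) (by
    intro x hx
    obtain ⟨c, rfl⟩ := (mem_mpow_iff π hπ (n - m) x).mp hx
    rw [LinearMap.mem_ker, smulQ_apply, Ideal.Quotient.eq_zero_iff_mem,
      mem_mpow_iff π hπ]
    exact ⟨c, by rw [← mul_assoc, ← pow_add, Nat.add_sub_cancel' hmn]⟩)

omit [Finite (IsLocalRing.ResidueField O)] in
theorem mun_mk (m n : ℕ) (hmn : m ≤ n) (y : O) :
    mun π hπ m n hmn (Ideal.Quotient.mk (𝔪 ^ (n - m)) y) =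
      Ideal.Quotient.mk (𝔪 ^ n) (π ^ m * y) := by
  rw [← smulQ_apply π m n y]
  exact Submodule.liftQ_apply _ _ y

include hπ in
omit [Finite (IsLocalRing.ResidueField O)] in
theorem mun_injective (m n : ℕ) (hmn : m ≤ n) : Injective (mun π hπ m n hmn) := by
  intro a b h
  obtain ⟨y, rfl⟩ := Ideal.Quotient.mk_surjective a
  obtain ⟨z, rfl⟩ := Ideal.Quotient.mk_surjective b
  rw [mun_mk, mun_mk, Ideal.Quotient.eq] at h
  rw [Ideal.Quotient.eq]
  rw [← mul_sub, mem_mpow_iff π hπ] at h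
  have hn : π ^ n = π ^ m * π ^ (n - m) := by
    rw [← pow_add, Nat.add_sub_cancel' hmn]
  rw [hn, mul_dvd_mul_iff_left (pow_ne_zero m hπ.ne_zero)] at h
  exact (mem_mpow_iff π hπ (n - m) _).mpr h

include hπ in
omit [Finite (IsLocalRing.ResidueField O)] in
theorem mun_mul (m n : ℕ) (hmn : m ≤ n) (c : O ⧸ (𝔪 ^ n)) (b : O ⧸ (𝔪 ^ (n - m))) :
    c * mun π hπ m n hmn b =
      mun π hπ m n hmn
        (Ideal.Quotient.factor (Ideal.pow_le_pow_right (n.sub_le m)) c * b) := by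
  obtain ⟨z, rfl⟩ := Ideal.Quotient.mk_surjective c
  obtain ⟨y, rfl⟩ := Ideal.Quotient.mk_surjective b
  rw [Ideal.Quotient.factor_mk, ← map_mul, mun_mk, mun_mk, ← map_mul]
  ring_nf

include hπ in
theorem card_ker_matrix {q : ℕ} (hq : Nat.card (IsLocalRing.ResidueField O) = q)
    (m n : ℕ) (hmn : m ≤ n) {d e : ℕ}
    (A : Matrix (Fin d) (Fin e) (O ⧸ (𝔪 ^ (n - m)))) :
    Nat.card {x : Fin d → O ⧸ (𝔪 ^ n) |
        Matrix.vecMul x (A.map (mun π hπ m n hmn)) = 0} =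
      q ^ (d * m) *
        Nat.card {y : Fin d → O ⧸ (𝔪 ^ (n - m)) | Matrix.vecMul y A = 0} := by
  classical
  set ρ := Ideal.Quotient.factor (S := 𝔪 ^ n) (T := 𝔪 ^ (n - m))
    (Ideal.pow_le_pow_right (n.sub_le m)) with hρ
  let f : (Fin d → O ⧸ (𝔪 ^ n)) →+ (Fin d → O ⧸ (𝔪 ^ (n - m))) :=
    { toFun := fun x i => ρ (x i)
      map_zero' := by funext i; simp
      map_add' := by intro a b; funext i; simp }
  have hf : Surjective f := by
    intro y
    choose g hg using fun i => factor_surjective (Ideal.pow_le_pow_right (n.sub_le m)) (y i)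
    exact ⟨g, funext hg⟩
  have h1 : ∀ (x : Fin d → O ⧸ (𝔪 ^ n)) (j : Fin e),
      Matrix.vecMul x (A.map (mun π hπ m n hmn)) j =
        mun π hπ m n hmn (Matrix.vecMul (f x) A j) := by
    intro x j
    simp only [Matrix.vecMul, dotProduct, Matrix.map_apply, map_sum]
    refine Finset.sum_congr rfl fun i _ => ?_
    rw [mun_mul π hπ m n hmn (x i) (A i j)]
    rfl
  have hset : {x : Fin d → O ⧸ (𝔪 ^ n) | Matrix.vecMul x (A.map (mun π hπ m n hmn)) = 0} =
      ⇑f ⁻¹' {y | Matrix.vecMul y A = 0} := by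
    ext x
    simp only [mem_setOf_eq, mem_preimage, funext_iff, Pi.zero_apply]
    refine forall_congr' fun j => ?_
    rw [h1 x j]
    exact Function.Injective.eq_iff' (mun_injective π hπ m n hmn) (map_zero _)
  rw [hset, card_preimage f hf]
  have hker : Nat.card {x : Fin d → O ⧸ (𝔪 ^ n) // f x = 0} = q ^ (d * m) := by
    have e1 : {x : Fin d → O ⧸ (𝔪 ^ n) // f x = 0} ≃
        (Fin d → {u : O ⧸ (𝔪 ^ n) // ρ u = 0}) :=
      (Equiv.subtypeEquivRight fun x => by
        simp only [funext_iff, Pi.zero_apply]; rfl).trans Equiv.subtypePiEquivPi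
    rw [Nat.card_congr e1, Nat.card_pi, Finset.prod_const,
      card_ker_factor π hπ hq m n hmn, Finset.card_univ, Fintype.card_fin,
      ← pow_mul, mul_comm m d]
  rw [hker, Nat.mul_comm]

end DVR

/-- Rescaling: for a DVR `O` with uniformizer `π` and residue field of cardinality `q`,
a submodule `M ⊆ Mat_{d×e}(O)` and `n ≥ m ≥ 0`,
`ask((π^m M)_n) = q^(d·m) · ask(M_{n-m})`. -/
theorem ask_rescale {O : Type*} [CommRing O] [IsDomain O] [IsDiscreteValuationRing O]
    (π : O) (hπ : Irreducible π)
    [Finite (IsLocalRing.ResidueField O)]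
    (q : ℕ) (hq : Nat.card (IsLocalRing.ResidueField O) = q)
    {d e : ℕ} (M : Submodule O (Matrix (Fin d) (Fin e) O))
    (m n : ℕ) (hmn : m ≤ n) :
    ask (reduceMod ((fun A => π ^ m • A) '' (M : Set (Matrix (Fin d) (Fin e) O)))
        (IsLocalRing.maximalIdeal O ^ n)) =
      (q : ℚ) ^ (d * m) *
        ask (reduceMod (M : Set (Matrix (Fin d) (Fin e) O))
          (IsLocalRing.maximalIdeal O ^ (n - m))) := by
  classical
  haveI hF1 : Finite (O ⧸ (IsLocalRing.maximalIdeal O ^ n)) := finite_quot π hπ n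
  haveI hF2 : Finite (O ⧸ (IsLocalRing.maximalIdeal O ^ (n - m))) := finite_quot π hπ (n - m)
  set N : Set (Matrix (Fin d) (Fin e) (O ⧸ (IsLocalRing.maximalIdeal O ^ (n - m)))) :=
    reduceMod (M : Set (Matrix (Fin d) (Fin e) O)) (IsLocalRing.maximalIdeal O ^ (n - m))
    with hN
  set Φ : Matrix (Fin d) (Fin e) (O ⧸ (IsLocalRing.maximalIdeal O ^ (n - m))) →
      Matrix (Fin d) (Fin e) (O ⧸ (IsLocalRing.maximalIdeal O ^ n)) :=
    fun A => A.map (mun π hπ m n hmn) with hΦ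
  have hΦinj : Function.Injective Φ := Matrix.map_injective (mun_injective π hπ m n hmn)
  have hN' : reduceMod ((fun A => π ^ m • A) '' (M : Set (Matrix (Fin d) (Fin e) O)))
      (IsLocalRing.maximalIdeal O ^ n) = Φ '' N := by
    rw [hN, reduceMod, reduceMod, Set.image_image, Set.image_image]
    refine Set.image_congr fun A _ => ?_
    ext i j
    simp only [hΦ, Matrix.map_apply, Matrix.smul_apply, smul_eq_mul]
    rw [mun_mk]
  rw [hN']
  simp only [ask]
  rw [Nat.card_image_of_injective hΦinj]
  let eqv : N ≃ (Φ '' N : Set _) := Equiv.Set.image Φ N hΦinj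
  rw [← finsum_comp_equiv eqv]
  have hterm : ∀ a : N,
      (Nat.card {x : Fin d → O ⧸ (IsLocalRing.maximalIdeal O ^ n) |
          Matrix.vecMul x ((eqv a : Matrix (Fin d) (Fin e) _)) = 0} : ℚ) =
        (q : ℚ) ^ (d * m) *
          (Nat.card {y : Fin d → O ⧸ (IsLocalRing.maximalIdeal O ^ (n - m)) |
            Matrix.vecMul y (a : Matrix (Fin d) (Fin e) _) = 0} : ℚ) := by
    intro a
    have h2 : (eqv a : Matrix (Fin d) (Fin e) _) = Φ (a : Matrix (Fin d) (Fin e) _) := rfl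
    rw [h2]
    have h3 := card_ker_matrix π hπ hq m n hmn (a : Matrix (Fin d) (Fin e) _)
    rw [hΦ]
    push_cast [h3]
    ring
  rw [finsum_congr hterm]
  rw [← mul_finsum]
  ring
end

section
/- Let O be a discrete valuation ring with maximal ideal 𝔪 and finite residue field, and let d > 1. Let sl_d(O) = {a ∈ Mat_d(O) : trace(a) = 0}. For n ≥ 0, let sl_d(O)_n denote the image of sl_d(O) under entrywise reduction Mat_d(O) → Mat_d(O/𝔪^n). Then for every n ≥ 0, ask(sl_d(O)_n) = ask(Mat_d(O/𝔪^n)); that is, the ask zeta functions of sl_d(O) and of the full matrix algebra gl_d(O) coincide. -/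
lemma finite_quot_pow (O : Type*) [CommRing O] [IsDomain O] [IsDiscreteValuationRing O]
    [Finite (IsLocalRing.ResidueField O)] (n : ℕ) :
    Finite (O ⧸ (IsLocalRing.maximalIdeal O ^ n)) := by
  induction n with
  | zero =>
    rw [pow_zero, Ideal.one_eq_top]
    have : Subsingleton (O ⧸ (⊤ : Ideal O)) := Ideal.Quotient.subsingleton_iff.mpr rfl
    infer_instance
  | succ k ih =>
    obtain ⟨π, hπ⟩ := IsDiscreteValuationRing.exists_irreducible O
    have hspan : IsLocalRing.maximalIdeal O = Ideal.span {π} :=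
      (IsDiscreteValuationRing.irreducible_iff_uniformizer π).mp hπ
    have hres : Finite (O ⧸ IsLocalRing.maximalIdeal O) :=
      ‹Finite (IsLocalRing.ResidueField O)›
    set I := IsLocalRing.maximalIdeal O ^ (k + 1) with hI
    set J := IsLocalRing.maximalIdeal O ^ k with hJ
    let s : (O ⧸ J) → O := Function.surjInv Ideal.Quotient.mk_surjective
    let s' : (O ⧸ IsLocalRing.maximalIdeal O) → O :=
      Function.surjInv Ideal.Quotient.mk_surjective
    have hs : ∀ y, Ideal.Quotient.mk J (s y) = y :=
      Function.surjInv_eq Ideal.Quotient.mk_surjective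
    have hs' : ∀ r, Ideal.Quotient.mk (IsLocalRing.maximalIdeal O) (s' r) = r :=
      Function.surjInv_eq Ideal.Quotient.mk_surjective
    let Φ : (O ⧸ J) × (O ⧸ IsLocalRing.maximalIdeal O) → O ⧸ I :=
      fun p => Ideal.Quotient.mk I (s p.1 + π ^ k * s' p.2)
    have hsurj : Function.Surjective Φ := by
      intro x
      obtain ⟨a, rfl⟩ := Ideal.Quotient.mk_surjective (I := I) x
      set y := Ideal.Quotient.mk J a with hy
      have h1 : a - s y ∈ J := by
        rw [← Ideal.Quotient.eq_zero_iff_mem, map_sub, hs, hy, sub_self]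
      rw [hJ, hspan, Ideal.span_singleton_pow, Ideal.mem_span_singleton'] at h1
      obtain ⟨c, hc⟩ := h1
      refine ⟨⟨y, Ideal.Quotient.mk _ c⟩, ?_⟩
      show Ideal.Quotient.mk I (s y + π ^ k * s' (Ideal.Quotient.mk _ c)) = _
      have h2 : s' (Ideal.Quotient.mk (IsLocalRing.maximalIdeal O) c) - c ∈
          IsLocalRing.maximalIdeal O := by
        rw [← Ideal.Quotient.eq_zero_iff_mem, map_sub, hs', sub_self]
      have h2' : s' (Ideal.Quotient.mk (IsLocalRing.maximalIdeal O) c) - c ∈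
          Ideal.span {π} := by rw [← hspan]; exact h2
      obtain ⟨e, he⟩ := Ideal.mem_span_singleton'.mp h2'
      have key : s y + π ^ k * s' (Ideal.Quotient.mk (IsLocalRing.maximalIdeal O) c) - a ∈ I := by
        have hw : s y + π ^ k * s' (Ideal.Quotient.mk (IsLocalRing.maximalIdeal O) c) - a
            = e * π ^ (k + 1) := by linear_combination hc - π ^ k * he
        rw [hw, hI, hspan, Ideal.span_singleton_pow, Ideal.mem_span_singleton']
        exact ⟨e, rfl⟩
      rwa [← sub_eq_zero, ← map_sub, Ideal.Quotient.eq_zero_iff_mem]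
    exact Finite.of_surjective Φ hsurj

open Matrix in
lemma vecMul_stdBasisMatrix' {R : Type*} [CommRing R] {d : ℕ} (x : Fin d → R)
    (i j : Fin d) (c : R) :
    Matrix.vecMul x (Matrix.single i j c) = fun k => if j = k then x i * c else 0 := by
  ext k
  simp only [Matrix.vecMul, dotProduct, Matrix.single, Matrix.of_apply, ite_and,
    mul_ite, mul_zero]
  rw [Finset.sum_ite_eq (Finset.univ : Finset (Fin d)) i]
  simp

open Matrix in
/-- The correction lemma: counting kernel matrices with/without trace condition. -/
lemma key_card {R : Type*} [CommRing R] {d : ℕ} (x : Fin d → R)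
    (i j : Fin d) (hij : i ≠ j) (c : R) (hc : x j = c * x i) :
    Nat.card {a : Matrix (Fin d) (Fin d) R | Matrix.vecMul x a = 0 ∧ a.trace = 0} * Nat.card R
      = Nat.card {a : Matrix (Fin d) (Fin d) R | Matrix.vecMul x a = 0} := by
  classical
  set M : R → Matrix (Fin d) (Fin d) R :=
    fun r => Matrix.single j j r - Matrix.single i j (c * r) with hM
  have htr : ∀ r, (M r).trace = r := by
    intro r
    rw [hM]
    simp only [Matrix.trace_sub, Matrix.trace_single_eq_same,
      Matrix.trace_single_eq_of_ne i j _ hij, sub_zero]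
  have hker : ∀ r, Matrix.vecMul x (M r) = 0 := by
    intro r
    rw [hM]
    simp only [Matrix.vecMul_sub, vecMul_stdBasisMatrix']
    funext k
    simp only [Pi.sub_apply, Pi.zero_apply]
    by_cases h : j = k
    · subst h; rw [if_pos rfl, if_pos rfl, hc]; ring
    · rw [if_neg h, if_neg h, sub_zero]
  rw [← Nat.card_prod]
  refine Nat.card_congr (Equiv.symm ⟨?_, ?_, ?_, ?_⟩)
  · rintro ⟨a, ha⟩
    exact ⟨⟨a - M a.trace, by
      constructor
      · rw [Matrix.vecMul_sub, ha, hker, sub_zero]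
      · rw [Matrix.trace_sub, htr, sub_self]⟩, a.trace⟩
  · rintro ⟨⟨b, hb1, hb2⟩, r⟩
    exact ⟨b + M r, by
      show Matrix.vecMul x (b + M r) = 0
      rw [Matrix.vecMul_add, hb1, hker, add_zero]⟩
  · rintro ⟨a, ha⟩
    simp
  · rintro ⟨⟨b, hb1, hb2⟩, r⟩
    simp [Matrix.trace_add, hb2, htr]

lemma double_count {R : Type*} [CommRing R] [Finite R] {d : ℕ}
    (N : Set (Matrix (Fin d) (Fin d) R)) :
    ∑ᶠ a : N, (Nat.card {x : Fin d → R | Matrix.vecMul x (a : Matrix (Fin d) (Fin d) R) = 0} : ℚ)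
      = ∑ᶠ x : Fin d → R,
        (Nat.card {a : Matrix (Fin d) (Fin d) R | a ∈ N ∧ Matrix.vecMul x a = 0} : ℚ) := by
  classical
  letI : Fintype R := Fintype.ofFinite R
  letI : Fintype ↥N := Fintype.ofFinite ↥N
  rw [finsum_eq_sum_of_fintype, finsum_eq_sum_of_fintype]
  have lhs_eq : ∀ a : ↥N,
      (Nat.card {x : Fin d → R | Matrix.vecMul x (a : Matrix (Fin d) (Fin d) R) = 0} : ℚ)
        = ∑ x : Fin d → R, if Matrix.vecMul x (a : Matrix (Fin d) (Fin d) R) = 0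
            then (1 : ℚ) else 0 := by
    intro a
    rw [Nat.card_eq_fintype_card, Fintype.card_subtype, Finset.card_filter]
    push_cast
    simp [apply_ite (Nat.cast : ℕ → ℚ)]
  have rhs_eq : ∀ x : Fin d → R,
      (Nat.card {a : Matrix (Fin d) (Fin d) R | a ∈ N ∧ Matrix.vecMul x a = 0} : ℚ)
        = ∑ a : ↥N, if Matrix.vecMul x (a : Matrix (Fin d) (Fin d) R) = 0
            then (1 : ℚ) else 0 := by
    intro x
    have e : Nat.card {a : Matrix (Fin d) (Fin d) R | a ∈ N ∧ Matrix.vecMul x a = 0}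
        = Nat.card {a : ↥N // Matrix.vecMul x (a : Matrix (Fin d) (Fin d) R) = 0} :=
      Nat.card_congr (Equiv.subtypeSubtypeEquivSubtypeInter (· ∈ N)
        (fun a => Matrix.vecMul x a = 0)).symm
    rw [e, Nat.card_eq_fintype_card, Fintype.card_subtype, Finset.card_filter]
    push_cast
    simp [apply_ite (Nat.cast : ℕ → ℚ)]
  simp_rw [lhs_eq, rhs_eq]
  exact Finset.sum_comm


lemma dvd_pair_quot {O : Type*} [CommRing O] [IsDomain O] [IsDiscreteValuationRing O]
    {I : Ideal O} (u v : O ⧸ I) : (∃ c, v = c * u) ∨ (∃ c, u = c * v) := by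
  obtain ⟨a, rfl⟩ := Ideal.Quotient.mk_surjective u
  obtain ⟨b, rfl⟩ := Ideal.Quotient.mk_surjective v
  rcases ValuationRing.dvd_total a b with ⟨c, rfl⟩ | ⟨c, rfl⟩
  · exact Or.inl ⟨Ideal.Quotient.mk I c, by rw [map_mul, mul_comm]⟩
  · exact Or.inr ⟨Ideal.Quotient.mk I c, by rw [map_mul, mul_comm]⟩

lemma exists_rel {O : Type*} [CommRing O] [IsDomain O] [IsDiscreteValuationRing O]
    {I : Ideal O} {d : ℕ} (hd : 1 < d) (x : Fin d → (O ⧸ I)) :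
    ∃ i j : Fin d, i ≠ j ∧ ∃ c, x j = c * x i := by
  have h01 : (⟨0, by omega⟩ : Fin d) ≠ ⟨1, hd⟩ := by simp [Fin.ext_iff]
  rcases dvd_pair_quot (x ⟨0, by omega⟩) (x ⟨1, hd⟩) with ⟨c, hc⟩ | ⟨c, hc⟩
  · exact ⟨⟨0, by omega⟩, ⟨1, hd⟩, h01, c, hc⟩
  · exact ⟨⟨1, hd⟩, ⟨0, by omega⟩, h01.symm, c, hc⟩


lemma reduceMod_sl {O : Type*} [CommRing O] {d : ℕ} (hd : 0 < d) (I : Ideal O) :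
    reduceMod {a : Matrix (Fin d) (Fin d) O | a.trace = 0} I
      = {b : Matrix (Fin d) (Fin d) (O ⧸ I) | b.trace = 0} := by
  classical
  ext b
  constructor
  · rintro ⟨a, ha, rfl⟩
    have : (a.map (Ideal.Quotient.mk I)).trace = Ideal.Quotient.mk I a.trace := by
      simp [Matrix.trace, Matrix.map_apply, Matrix.diag, map_sum]
    simp only [Set.mem_setOf_eq] at ha ⊢
    rw [this, ha, map_zero]
  · intro hb
    simp only [Set.mem_setOf_eq] at hb
    let A : Matrix (Fin d) (Fin d) O :=
      Matrix.of fun i j => Function.surjInv (Ideal.Quotient.mk_surjective (I := I)) (b i j)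
    have hA : A.map (Ideal.Quotient.mk I) = b := by
      ext i j
      exact Function.surjInv_eq Ideal.Quotient.mk_surjective (b i j)
    set z : Fin d := ⟨0, hd⟩
    refine ⟨A - Matrix.single z z A.trace, ?_, ?_⟩
    · show (A - Matrix.single z z A.trace).trace = 0
      rw [Matrix.trace_sub, Matrix.trace_single_eq_same, sub_self]
    · have hmem : Ideal.Quotient.mk I A.trace = 0 := by
        rw [show Ideal.Quotient.mk I A.trace = (A.map (Ideal.Quotient.mk I)).trace by
          simp [Matrix.trace, Matrix.map_apply, Matrix.diag, map_sum], hA, hb]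
      ext i j
      simp only [Matrix.map_apply, Matrix.sub_apply, map_sub]
      rw [← hA]
      simp only [Matrix.map_apply, Matrix.single, Matrix.of_apply]
      by_cases h : z = i ∧ z = j
      · obtain ⟨rfl, rfl⟩ := h
        simp [hmem]
      · simp [h]

/-- For `d > 1`, the ask zeta function of `sl_d(O)` coincides with that of `gl_d(O)`:
at every level `n`, `ask(sl_d(O)_n) = ask(Mat_d(O/𝔪^n))`. -/
theorem ask_sl_eq_ask_gl {O : Type*} [CommRing O] [IsDomain O] [IsDiscreteValuationRing O]
    [Finite (IsLocalRing.ResidueField O)]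
    {d : ℕ} (hd : 1 < d) (n : ℕ) :
    ask (reduceMod {a : Matrix (Fin d) (Fin d) O | a.trace = 0}
        (IsLocalRing.maximalIdeal O ^ n)) =
      ask (Set.univ : Set (Matrix (Fin d) (Fin d) (O ⧸ IsLocalRing.maximalIdeal O ^ n))) := by
  classical
  set R := O ⧸ IsLocalRing.maximalIdeal O ^ n with hR
  haveI : Finite R := finite_quot_pow O n
  letI : Fintype R := Fintype.ofFinite R
  have hd0 : 0 < d := by omega
  rw [reduceMod_sl hd0]
  set sl : Set (Matrix (Fin d) (Fin d) R) := {b | b.trace = 0} with hsl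
  have h01 : (⟨0, hd0⟩ : Fin d) ≠ ⟨1, hd⟩ := by simp [Fin.ext_iff]
  -- cardinality of the full matrix space vs sl
  have hzero : {a : Matrix (Fin d) (Fin d) R | Matrix.vecMul (0 : Fin d → R) a = 0}
      = Set.univ := by
    ext a; simp [Matrix.zero_vecMul]
  have hzero' : {a : Matrix (Fin d) (Fin d) R |
      Matrix.vecMul (0 : Fin d → R) a = 0 ∧ a.trace = 0} = sl := by
    ext a; simp [hsl, Matrix.zero_vecMul]
  have hcard : Nat.card sl * Nat.card R
      = Nat.card (Set.univ : Set (Matrix (Fin d) (Fin d) R)) := by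
    have := key_card (0 : Fin d → R) ⟨0, hd0⟩ ⟨1, hd⟩ h01 1 (by simp)
    rwa [hzero, hzero'] at this
  -- pointwise count
  have hpt : ∀ x : Fin d → R,
      (Nat.card {a : Matrix (Fin d) (Fin d) R | a ∈ sl ∧ Matrix.vecMul x a = 0}) * Nat.card R
        = Nat.card {a : Matrix (Fin d) (Fin d) R |
            a ∈ Set.univ ∧ Matrix.vecMul x a = 0} := by
    intro x
    obtain ⟨i, j, hij, c, hc⟩ := exists_rel hd x
    have h1 := key_card x i j hij c hc
    have e1 : {a : Matrix (Fin d) (Fin d) R | a ∈ sl ∧ Matrix.vecMul x a = 0}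
        = {a : Matrix (Fin d) (Fin d) R | Matrix.vecMul x a = 0 ∧ a.trace = 0} := by
      ext a; simp [hsl, and_comm]
    have e2 : {a : Matrix (Fin d) (Fin d) R | a ∈ Set.univ ∧ Matrix.vecMul x a = 0}
        = {a : Matrix (Fin d) (Fin d) R | Matrix.vecMul x a = 0} := by
      ext a; simp
    rw [e1, e2, h1]
  unfold ask
  rw [double_count sl, double_count (Set.univ : Set (Matrix (Fin d) (Fin d) R))]
  rw [finsum_eq_sum_of_fintype, finsum_eq_sum_of_fintype]
  have hq : (Nat.card R : ℚ) ≠ 0 := by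
    have : 0 < Nat.card R := Nat.card_pos
    exact_mod_cast this.ne'
  have hsum : ∑ x : Fin d → R, (Nat.card {a : Matrix (Fin d) (Fin d) R |
        a ∈ Set.univ ∧ Matrix.vecMul x a = 0} : ℚ)
      = (∑ x : Fin d → R, (Nat.card {a : Matrix (Fin d) (Fin d) R |
        a ∈ sl ∧ Matrix.vecMul x a = 0} : ℚ)) * Nat.card R := by
    rw [Finset.sum_mul]
    refine Finset.sum_congr rfl fun x _ => ?_
    rw [← hpt x]
    push_cast
    ring
  rw [hsum]
  have hcardU : (Nat.card (Set.univ : Set (Matrix (Fin d) (Fin d) R)) : ℚ)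
      = (Nat.card sl : ℚ) * Nat.card R := by exact_mod_cast hcard.symm
  rw [hcardU, mul_inv]
  have : ((Nat.card R : ℚ))⁻¹ * (Nat.card R : ℚ) = 1 := inv_mul_cancel₀ hq
  calc ((Nat.card sl : ℚ))⁻¹ * ∑ x : Fin d → R, (Nat.card {a : Matrix (Fin d) (Fin d) R |
        a ∈ sl ∧ Matrix.vecMul x a = 0} : ℚ)
      = ((Nat.card sl : ℚ))⁻¹ * ((Nat.card R : ℚ))⁻¹ *
        ((∑ x : Fin d → R, (Nat.card {a : Matrix (Fin d) (Fin d) R |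
          a ∈ sl ∧ Matrix.vecMul x a = 0} : ℚ)) * (Nat.card R : ℚ)) := by
        rw [mul_comm _ ((Nat.card R : ℚ))]
        rw [show ((Nat.card sl : ℚ))⁻¹ * ((Nat.card R : ℚ))⁻¹ *
          ((Nat.card R : ℚ) * ∑ x : Fin d → R, (Nat.card {a : Matrix (Fin d) (Fin d) R |
            a ∈ sl ∧ Matrix.vecMul x a = 0} : ℚ))
          = ((Nat.card R : ℚ))⁻¹ * (Nat.card R : ℚ) * (((Nat.card sl : ℚ))⁻¹ *
           ∑ x : Fin d → R, (Nat.card {a : Matrix (Fin d) (Fin d) R |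
            a ∈ sl ∧ Matrix.vecMul x a = 0} : ℚ)) from by ring, this, one_mul]
    _ = _ := rfl
end

section
/- Let O be a discrete valuation ring with maximal ideal 𝔪 and finite residue field, and suppose 2 ≠ 0 in O (equivalently, the fraction field of O has characteristic ≠ 2). Let so_d(O) = {a ∈ Mat_d(O) : a + a^⊤ = 0}. For n ≥ 0, let so_d(O)_n denote the image of so_d(O) under entrywise reduction Mat_d(O) → Mat_d(O/𝔪^n). Then for every n ≥ 0, ask(so_d(O)_n) = ask(Mat_{d×(d-1)}(O/𝔪^n)); that is, the ask zeta function of so_d(O) equals that of the full module of d×(d-1) matrices over O. -/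
open Matrix

/-- The subgroup of alternating matrices. -/
def altGroup (d : ℕ) (S : Type*) [CommRing S] : AddSubgroup (Matrix (Fin d) (Fin d) S) where
  carrier := {A | A.transpose = -A ∧ ∀ i, A i i = 0}
  zero_mem' := by simp
  add_mem' := by
    rintro A B ⟨hA, hA'⟩ ⟨hB, hB'⟩
    refine ⟨by rw [transpose_add, hA, hB, neg_add], fun i => by
      simp [Matrix.add_apply, hA' i, hB' i]⟩
  neg_mem' := by
    rintro A ⟨hA, hA'⟩
    exact ⟨by rw [transpose_neg, hA, neg_neg], fun i => by simp [hA' i]⟩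

lemma alt_dot {S : Type*} [CommRing S] {d : ℕ} {a : Matrix (Fin d) (Fin d) S}
    (ha : a ∈ altGroup d S) (v : Fin d → S) : v ⬝ᵥ Matrix.vecMul v a = 0 := by
  obtain ⟨h1, h2⟩ := ha
  have expand : v ⬝ᵥ Matrix.vecMul v a
      = ∑ p : Fin d × Fin d, v p.1 * a p.1 p.2 * v p.2 := by
    rw [Fintype.sum_prod_type, Finset.sum_comm]
    simp only [dotProduct, Matrix.vecMul, Finset.mul_sum]
    refine Finset.sum_congr rfl fun j _ => Finset.sum_congr rfl fun i _ => by ring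
  rw [expand]
  refine Finset.sum_involution (fun p _ => p.swap) ?_ ?_ (fun _ _ => Finset.mem_univ _) ?_
  · intro p _
    rcases eq_or_ne p.1 p.2 with h | h
    · simp [h, h2 p.2]
    · have : a p.2 p.1 = -a p.1 p.2 := by
        have := congrFun (congrFun h1 p.1) p.2
        simpa [Matrix.transpose_apply] using this
      simp [Prod.swap, this]; ring
  · intro p _ hne heq
    apply hne
    have : p.1 = p.2 := by
      have := congrArg Prod.fst heq
      simpa [Prod.swap] using this.symm
    simp [this, h2 p.2]
  · intro p _; simp

lemma card_setOf_eq_sum {X : Type*} [Fintype X] (P : X → Prop) [DecidablePred P] :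
    (Nat.card {x | P x} : ℚ) = ∑ x : X, if P x then (1 : ℚ) else 0 := by
  rw [Nat.card_eq_fintype_card]
  rw [Fintype.card_subtype]
  rw [Finset.card_filter]
  push_cast
  rfl

lemma ask_addSubgroup {S : Type*} [CommRing S] [Finite S] {d e : ℕ}
    (N : AddSubgroup (Matrix (Fin d) (Fin e) S)) :
    ask (N : Set (Matrix (Fin d) (Fin e) S)) =
      ∑ᶠ x : Fin d → S,
        ((Nat.card (Set.range fun a : N => vecMul x (a : Matrix (Fin d) (Fin e) S)) : ℚ))⁻¹ := by
  classical
  haveI : Fintype S := Fintype.ofFinite S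
  set φ : (Fin d → S) → (↥N →+ (Fin e → S)) := fun x =>
    { toFun := fun a => vecMul x (a : Matrix (Fin d) (Fin e) S)
      map_zero' := by simp
      map_add' := by intro a b; simp [vecMul_add] } with hφ
  have hcardN : (0 : ℚ) < Nat.card ↥N := by
    exact_mod_cast Nat.card_pos
  have key : ∀ x, (Nat.card {a : ↥N | vecMul x (a : Matrix (Fin d) (Fin e) S) = 0} : ℚ)
      * Nat.card (Set.range fun a : ↥N => vecMul x (a : Matrix (Fin d) (Fin e) S))
      = Nat.card ↥N := by
    intro x
    have h1 : Nat.card ↥N = Nat.card (↥N ⧸ (φ x).ker) * Nat.card ((φ x).ker) :=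
      AddSubgroup.card_eq_card_quotient_mul_card_addSubgroup _
    have h2 : Nat.card (↥N ⧸ (φ x).ker) = Nat.card ((φ x).range) :=
      Nat.card_congr (QuotientAddGroup.quotientKerEquivRange (φ x)).toEquiv
    have h3 : Nat.card ((φ x).ker)
        = Nat.card {a : ↥N | vecMul x (a : Matrix (Fin d) (Fin e) S) = 0} := by
      apply Nat.card_congr
      exact Equiv.subtypeEquivRight (fun a => by
        simp [hφ, AddMonoidHom.mem_ker, Set.mem_setOf_eq])
    have h4 : Nat.card ((φ x).range)
        = Nat.card (Set.range fun a : ↥N => vecMul x (a : Matrix (Fin d) (Fin e) S)) := rfl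
    rw [h1, h2, h3, h4]
    push_cast
    ring
  have hrange_pos : ∀ x : Fin d → S,
      (0:ℚ) < Nat.card (Set.range fun a : ↥N => vecMul x (a : Matrix (Fin d) (Fin e) S)) := by
    intro x
    haveI : Nonempty (Set.range fun a : ↥N => vecMul x (a : Matrix (Fin d) (Fin e) S)) :=
      ⟨⟨_, ⟨0, rfl⟩⟩⟩
    exact_mod_cast Nat.card_pos
  haveI : Fintype ↥(N : Set (Matrix (Fin d) (Fin e) S)) := Fintype.ofFinite _
  haveI : Fintype ↥N := Fintype.ofFinite _
  rw [ask, finsum_eq_sum_of_fintype, finsum_eq_sum_of_fintype]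
  have swap : ∑ a : ↥(N : Set (Matrix (Fin d) (Fin e) S)),
        (Nat.card {x : Fin d → S | vecMul x (a : Matrix (Fin d) (Fin e) S) = 0} : ℚ)
      = ∑ x : Fin d → S,
        (Nat.card {a : ↥N | vecMul x (a : Matrix (Fin d) (Fin e) S) = 0} : ℚ) := by
    have l : ∀ a : ↥(N : Set (Matrix (Fin d) (Fin e) S)),
        (Nat.card {x : Fin d → S | vecMul x (a : Matrix (Fin d) (Fin e) S) = 0} : ℚ)
          = ∑ x : Fin d → S, if vecMul x (a : Matrix (Fin d) (Fin e) S) = 0 then (1:ℚ) else 0 :=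
      fun a => card_setOf_eq_sum _
    have r : ∀ x : Fin d → S,
        (Nat.card {a : ↥N | vecMul x (a : Matrix (Fin d) (Fin e) S) = 0} : ℚ)
          = ∑ a : ↥N, if vecMul x (a : Matrix (Fin d) (Fin e) S) = 0 then (1:ℚ) else 0 :=
      fun x => card_setOf_eq_sum _
    simp only [l, r]
    exact Finset.sum_comm
  rw [swap, Finset.mul_sum]
  refine Finset.sum_congr rfl fun x _ => ?_
  have hx := key x
  have hk : (0:ℚ) < Nat.card {a : ↥N | vecMul x (a : Matrix (Fin d) (Fin e) S) = 0} := by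
    haveI : Nonempty {a : ↥N | vecMul x (a : Matrix (Fin d) (Fin e) S) = 0} := ⟨⟨0, by simp⟩⟩
    exact_mod_cast Nat.card_pos
  have hNN : Nat.card (↥(N : Set (Matrix (Fin d) (Fin e) S))) = Nat.card ↥N := rfl
  rw [hNN, ← hx, _root_.mul_inv_rev, mul_assoc, inv_mul_cancel₀ (ne_of_gt hk), mul_one]

lemma mem_altGroup {S : Type*} [CommRing S] {d : ℕ} {a : Matrix (Fin d) (Fin d) S} :
    a ∈ altGroup d S ↔ a.transpose = -a ∧ ∀ i, a i i = 0 := Iff.rfl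

lemma vecMul_vecMulVec {S : Type*} [CommRing S] {d e : ℕ}
    (v p : Fin d → S) (q : Fin e → S) :
    vecMul v (vecMulVec p q) = (v ⬝ᵥ p) • q := by
  funext j
  simp only [Matrix.vecMul, dotProduct, vecMulVec_apply, Pi.smul_apply, smul_eq_mul,
    Finset.sum_mul]
  exact Finset.sum_congr rfl fun i _ => by ring

lemma card_range_core {S : Type*} [CommRing S] [Finite S] {m : ℕ}
    (x x' : Fin (m+1) → S) (c : S) (i0 : Fin (m+1)) (hu : IsUnit (x' i0)) (hx : x = c • x') :
    Nat.card (Set.range fun a : altGroup (m+1) S =>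
        vecMul x (a : Matrix (Fin (m+1)) (Fin (m+1)) S))
      = Nat.card (Set.range fun b : Matrix (Fin (m+1)) (Fin m) S => vecMul x b) := by
  classical
  obtain ⟨u, hu'⟩ := hu
  set R : Set S := Set.range (fun s : S => c * s) with hR
  set σ : Fin m → Fin (m+1) := i0.succAbove with hσ
  -- the full range
  have hfull : (Set.range fun b : Matrix (Fin (m+1)) (Fin m) S => vecMul x b)
      = Set.univ.pi (fun _ : Fin m => R) := by
    ext y
    constructor
    · rintro ⟨b, rfl⟩
      rw [Set.mem_univ_pi]
      intro j
      refine ⟨∑ i, x' i * b i j, ?_⟩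
      simp only [Matrix.vecMul, dotProduct, hx, Pi.smul_apply, smul_eq_mul, Finset.mul_sum]
      exact Finset.sum_congr rfl fun i _ => by ring
    · intro hy
      have hs' : ∀ j, ∃ t, y j = c * t := by
        intro j
        obtain ⟨t, ht⟩ := (Set.mem_univ_pi.mp hy) j
        exact ⟨t, ht.symm⟩
      choose s hs using hs'
      refine ⟨fun i j => if i = i0 then (↑u⁻¹ : S) * s j else 0, ?_⟩
      funext j
      simp only [Matrix.vecMul, dotProduct]
      rw [Finset.sum_eq_single i0]
      · rw [if_pos rfl, hx, hs j]
        simp only [Pi.smul_apply, smul_eq_mul]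
        rw [← hu', mul_assoc, ← mul_assoc (u : S), u.mul_inv, one_mul]
      · intro i _ hi
        rw [if_neg hi, mul_zero]
      · intro h
        exact absurd (Finset.mem_univ i0) h
  -- the embedding
  set ℓ : (Fin m → S) → (Fin (m+1) → S) := fun w =>
    Fin.insertNth i0 (-((↑u⁻¹ : S) * ∑ j, x' (σ j) * w j)) w with hℓ
  have hℓinj : Function.Injective ℓ := by
    intro w w' h
    funext j
    have := congrFun h (σ j)
    simpa [hℓ, hσ, Fin.insertNth_apply_succAbove] using this
  have halt : (Set.range fun a : altGroup (m+1) S =>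
      vecMul x (a : Matrix (Fin (m+1)) (Fin (m+1)) S)) = ℓ '' (Set.univ.pi fun _ : Fin m => R) := by
    ext y
    constructor
    · rintro ⟨⟨a, ha⟩, rfl⟩
      simp only
      set z : Fin (m+1) → S := vecMul x' a with hz
      have hy : vecMul x a = c • z := by rw [hx, smul_vecMul, hz]
      have hdot : ∑ i, x' i * vecMul x a i = 0 := by
        have h0 : x' ⬝ᵥ vecMul x' a = 0 := alt_dot ha x'
        calc ∑ i, x' i * vecMul x a i = c * (x' ⬝ᵥ vecMul x' a) := by
              rw [dotProduct, Finset.mul_sum]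
              refine Finset.sum_congr rfl fun i _ => ?_
              rw [hy]
              simp only [Pi.smul_apply, smul_eq_mul]
              ring
          _ = 0 := by rw [h0, mul_zero]
      refine ⟨fun j => vecMul x a (σ j), ?_, ?_⟩
      · rw [Set.mem_univ_pi]
        intro j
        exact ⟨z (σ j), by rw [hy]; simp⟩
      · funext k
        rcases eq_or_ne k i0 with he | hk
        · rw [he, hℓ]
          simp only [Fin.insertNth_apply_same]
          have hsum : ∑ j, x' (σ j) * vecMul x a (σ j) = -(x' i0 * vecMul x a i0) := by
            rw [Fin.sum_univ_succAbove (fun i => x' i * vecMul x a i) i0] at hdot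
            exact eq_neg_of_add_eq_zero_right hdot
          rw [hsum, ← hu', mul_neg, ← mul_assoc, u.inv_mul, one_mul, neg_neg]
        · obtain ⟨j, rfl⟩ := Fin.exists_succAbove_eq (Ne.symm hk).symm
          rw [hℓ]
          simp [hσ, Fin.insertNth_apply_succAbove]
    · rintro ⟨w, hw, rfl⟩
      have hs' : ∀ j, ∃ t, w j = c * t := by
        intro j
        obtain ⟨t, ht⟩ := (Set.mem_univ_pi.mp hw) j
        exact ⟨t, ht.symm⟩
      choose s hs using hs'
      set T : S := ∑ j, x' (σ j) * s j with hT
      set z : Fin (m+1) → S := Fin.insertNth i0 (-((↑u⁻¹ : S) * T)) s with hz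
      have hdotz : x' ⬝ᵥ z = 0 := by
        rw [dotProduct, Fin.sum_univ_succAbove (fun i => x' i * z i) i0]
        have h1 : z i0 = -((↑u⁻¹ : S) * T) := by rw [hz]; simp
        have h2 : ∀ j, z (σ j) = s j := fun j => by rw [hz, hσ]; simp
        simp only [h1, h2]
        rw [← hu', mul_neg, ← mul_assoc, u.mul_inv, one_mul, hT]
        simp only [show ∀ j, z (i0.succAbove j) = s j from h2]
        exact neg_add_cancel _
      set p : Fin (m+1) → S := fun i => (↑u⁻¹ : S) * (Pi.single i0 (1:S) : Fin (m+1) → S) i with hp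
      set a : Matrix (Fin (m+1)) (Fin (m+1)) S := vecMulVec p z - vecMulVec z p with haa
      have hamem : a ∈ altGroup (m+1) S := by
        rw [mem_altGroup]
        constructor
        · funext i j
          simp [haa, vecMulVec_apply, Matrix.sub_apply, Matrix.transpose_apply, mul_comm]
        · intro i
          rw [haa]
          simp only [Matrix.sub_apply, vecMulVec_apply]
          ring
      have hxp : x' ⬝ᵥ p = (↑u⁻¹ : S) * x' i0 := by
        rw [dotProduct, hp, Finset.sum_eq_single i0]
        · simp [mul_comm]
        · intro i _ hi
          simp [Pi.single_eq_of_ne hi]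
        · intro h
          exact absurd (Finset.mem_univ i0) h
      have hva : vecMul x' a = z := by
        rw [haa, vecMul_sub, _root_.vecMul_vecMulVec, _root_.vecMul_vecMulVec, hdotz, hxp, ← hu',
          u.inv_mul]
        simp
      refine ⟨⟨a, hamem⟩, ?_⟩
      show vecMul x a = ℓ w
      have hca : vecMul x a = c • z := by rw [hx, smul_vecMul, hva]
      rw [hca, hℓ]
      funext k
      rcases eq_or_ne k i0 with he | hk
      · rw [he]
        simp only [Fin.insertNth_apply_same, Pi.smul_apply, smul_eq_mul]
        have hz0 : z i0 = -((↑u⁻¹:S) * T) := by rw [hz]; simp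
        rw [hz0]
        have hsw : ∑ j, x' (σ j) * w j = c * T := by
          rw [hT, Finset.mul_sum]
          exact Finset.sum_congr rfl fun j _ => by rw [hs j]; ring
        rw [hsw]; ring
      · obtain ⟨j, hj⟩ := Fin.exists_succAbove_eq hk
        have hjσ : σ j = k := by rw [hσ]; exact hj
        rw [← hjσ]
        simp only [Pi.smul_apply, smul_eq_mul, hσ, Fin.insertNth_apply_succAbove]
        have hzs : z (i0.succAbove j) = s j := by rw [hz]; simp
        rw [hzs, ← hs j]
  rw [hfull, halt, Nat.card_image_of_injective hℓinj]

lemma exists_dvd_all {O : Type*} [CommRing O] [IsDomain O] [IsDiscreteValuationRing O]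
    {m : ℕ} (f : Fin (m+1) → O) : ∃ i0, ∀ i, f i0 ∣ f i := by
  induction m with
  | zero =>
    refine ⟨0, fun i => ?_⟩
    have : i = 0 := Fin.ext (by omega)
    rw [this]
  | succ k ih =>
    obtain ⟨j0, hj0⟩ := ih (fun i => f i.castSucc)
    rcases ValuationRing.dvd_total (f j0.castSucc) (f (Fin.last (k+1))) with h | h
    · refine ⟨j0.castSucc, fun i => ?_⟩
      refine Fin.lastCases ?_ ?_ i
      · exact h
      · intro j; exact hj0 j
    · refine ⟨Fin.last (k+1), fun i => ?_⟩
      refine Fin.lastCases ?_ ?_ i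
      · exact dvd_rfl
      · intro j; exact h.trans (hj0 j)

lemma finite_quotient_pow {O : Type*} [CommRing O] [IsDomain O] [IsDiscreteValuationRing O]
    [Finite (IsLocalRing.ResidueField O)] (n : ℕ) :
    Finite (O ⧸ (IsLocalRing.maximalIdeal O ^ n)) := by
  induction n with
  | zero =>
    rw [pow_zero, Ideal.one_eq_top]
    haveI : Subsingleton (O ⧸ (⊤ : Ideal O)) := by
      refine ⟨fun a b => ?_⟩
      obtain ⟨a, rfl⟩ := Ideal.Quotient.mk_surjective a
      obtain ⟨b, rfl⟩ := Ideal.Quotient.mk_surjective b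
      rw [Ideal.Quotient.eq]
      trivial
    infer_instance
  | succ k ih =>
    obtain ⟨ϖ, hϖ⟩ := IsDiscreteValuationRing.exists_irreducible O
    have hmax : IsLocalRing.maximalIdeal O = Ideal.span {ϖ} :=
      (IsDiscreteValuationRing.irreducible_iff_uniformizer ϖ).mp hϖ
    set I := IsLocalRing.maximalIdeal O with hI
    have hle : I ^ (k+1) ≤ I ^ k := Ideal.pow_le_pow_right (Nat.le_succ k)
    set g : O ⧸ I^(k+1) →+* O ⧸ I^k := Ideal.Quotient.factor hle with hg
    set K : AddSubgroup (O ⧸ I^(k+1)) := g.toAddMonoidHom.ker with hK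
    haveI : Finite (O ⧸ I ^ k) := ih
    haveI : Finite (O ⧸ I) := ‹Finite (IsLocalRing.ResidueField O)›
    haveI hfinK : Finite K := by
      set sec : (O ⧸ I) → O := Function.surjInv (Ideal.Quotient.mk_surjective (I := I))
        with hsec
      set h' : (O ⧸ I) → O ⧸ I^(k+1) := fun r => Ideal.Quotient.mk _ (ϖ^k * sec r) with hh'
      have hsub : (K : Set (O ⧸ I^(k+1))) ⊆ Set.range h' := by
        intro q hq
        obtain ⟨b, rfl⟩ := Ideal.Quotient.mk_surjective q
        have hb : b ∈ I ^ k := by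
          have : g (Ideal.Quotient.mk _ b) = 0 := hq
          rw [hg, Ideal.Quotient.factor_mk, Ideal.Quotient.eq_zero_iff_mem] at this
          exact this
        rw [hmax, Ideal.span_singleton_pow, Ideal.mem_span_singleton] at hb
        obtain ⟨t, rfl⟩ := hb
        refine ⟨Ideal.Quotient.mk I t, ?_⟩
        rw [hh']
        rw [Ideal.Quotient.eq]
        have h1 : ϖ ^ k * sec (Ideal.Quotient.mk I t) - ϖ ^ k * t
            = ϖ ^ k * (sec (Ideal.Quotient.mk I t) - t) := by ring
        rw [h1, pow_succ]
        refine Ideal.mul_mem_mul (Ideal.pow_mem_pow ?_ k) ?_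
        · rw [hmax]; exact Ideal.mem_span_singleton.mpr dvd_rfl
        · have h2 : Ideal.Quotient.mk I (sec (Ideal.Quotient.mk I t)) = Ideal.Quotient.mk I t :=
            Function.surjInv_eq _ _
          exact Ideal.Quotient.eq.mp h2
      exact (Set.Finite.subset (Set.finite_range h') hsub).to_subtype
    haveI : Finite ((O ⧸ I^(k+1)) ⧸ K) := by
      exact Finite.of_equiv _ (QuotientAddGroup.quotientKerEquivRange g.toAddMonoidHom).toEquiv.symm
    exact Finite.of_addSubgroup_quotient K

lemma exists_decomp {O : Type*} [CommRing O] [IsDomain O] [IsDiscreteValuationRing O]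
    (c : Ideal O) {m : ℕ} (x : Fin (m+1) → O ⧸ c)
    (exists_dvd_all : ∀ (f : Fin (m+1) → O), ∃ i0, ∀ i, f i0 ∣ f i) :
    ∃ (u : O ⧸ c) (x' : Fin (m+1) → O ⧸ c) (i0 : Fin (m+1)),
      IsUnit (x' i0) ∧ x = u • x' := by
  classical
  have hsurj := Ideal.Quotient.mk_surjective (I := c)
  choose xt hxt using fun i => hsurj (x i)
  obtain ⟨i0, hi0⟩ := exists_dvd_all xt
  choose t ht using hi0
  refine ⟨Ideal.Quotient.mk c (xt i0),
    fun i => if i = i0 then 1 else Ideal.Quotient.mk c (t i), i0, by simp, ?_⟩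
  funext i
  rcases eq_or_ne i i0 with rfl | hi
  · simp [← hxt i]
  · simp only [Pi.smul_apply, smul_eq_mul, if_neg hi]
    rw [← hxt i, ht i, _root_.map_mul]

lemma reduceMod_skew {O : Type*} [CommRing O] [IsDomain O] (h2 : (2:O) ≠ 0) {d : ℕ}
    (c : Ideal O) :
    reduceMod {a : Matrix (Fin d) (Fin d) O | a + a.transpose = 0} c
      = (altGroup d (O ⧸ c) : Set (Matrix (Fin d) (Fin d) (O ⧸ c))) := by
  classical
  ext A
  constructor
  · rintro ⟨a, ha, rfl⟩
    have ha' : a + a.transpose = 0 := ha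
    have hskew : ∀ i j, a j i = -(a i j) := by
      intro i j
      have h := congrFun (congrFun ha' i) j
      simp only [Matrix.add_apply, Matrix.transpose_apply, Matrix.zero_apply] at h
      linear_combination h
    have hdiag : ∀ i, a i i = 0 := by
      intro i
      have h := congrFun (congrFun ha' i) i
      simp only [Matrix.add_apply, Matrix.transpose_apply, Matrix.zero_apply] at h
      have h2' : (2:O) * a i i = 0 := by linear_combination h
      rcases mul_eq_zero.mp h2' with h | h
      · exact absurd h h2
      · exact h
    constructor
    · funext i j
      simp only [Matrix.transpose_apply, Matrix.map_apply, Matrix.neg_apply]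
      rw [hskew i j, _root_.map_neg]
    · intro i
      simp only [Matrix.map_apply, hdiag i, map_zero]
  · rintro ⟨hA, hd⟩
    set sec : O ⧸ c → O := Function.surjInv (Ideal.Quotient.mk_surjective (I := c)) with hsec
    have hsec' : ∀ y, Ideal.Quotient.mk c (sec y) = y := fun y => Function.surjInv_eq _ _
    refine ⟨Matrix.of fun i j => if i < j then sec (A i j) else if j < i then -(sec (A j i)) else 0,
      ?_, ?_⟩
    · show _ + _ = 0
      funext i j
      simp only [Matrix.add_apply, Matrix.transpose_apply, Matrix.zero_apply, Matrix.of_apply]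
      rcases lt_trichotomy i j with h | h | h
      · rw [if_pos h, if_neg (asymm h), if_pos h]
        ring
      · subst h
        simp [lt_irrefl]
      · rw [if_neg (asymm h), if_pos h, if_pos h]
        ring
    · funext i j
      simp only [Matrix.map_apply, Matrix.of_apply]
      rcases lt_trichotomy i j with h | h | h
      · rw [if_pos h, hsec']
      · subst h
        rw [if_neg (lt_irrefl i), if_neg (lt_irrefl i), map_zero]
        exact (hd i).symm
      · rw [if_neg (asymm h), if_pos h, map_neg, hsec']
        have := congrFun (congrFun hA i) j
        simp only [Matrix.transpose_apply, Matrix.neg_apply] at this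
        rw [this, neg_neg]


/-- If `2 ≠ 0` in the DVR `O`, then the ask zeta function of `so_d(O)` coincides with
that of the full module of `d × (d-1)` matrices:
at every level `n`, `ask(so_d(O)_n) = ask(Mat_{d×(d-1)}(O/𝔪^n))`. -/
theorem ask_so_eq_ask_rect {O : Type*} [CommRing O] [IsDomain O] [IsDiscreteValuationRing O]
    [Finite (IsLocalRing.ResidueField O)]
    (h2 : (2 : O) ≠ 0) (d : ℕ) (n : ℕ) :
    ask (reduceMod {a : Matrix (Fin d) (Fin d) O | a + a.transpose = 0}
        (IsLocalRing.maximalIdeal O ^ n)) =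
      ask (Set.univ :
        Set (Matrix (Fin d) (Fin (d - 1)) (O ⧸ IsLocalRing.maximalIdeal O ^ n))) := by
  classical
  haveI : Finite (O ⧸ (IsLocalRing.maximalIdeal O ^ n)) := finite_quotient_pow n
  rw [reduceMod_skew h2]
  have htop : (Set.univ : Set (Matrix (Fin d) (Fin (d-1)) (O ⧸ IsLocalRing.maximalIdeal O ^ n)))
      = ((⊤ : AddSubgroup (Matrix (Fin d) (Fin (d-1))
          (O ⧸ IsLocalRing.maximalIdeal O ^ n))) : Set _) := by simp
  rw [htop, ask_addSubgroup, ask_addSubgroup]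
  apply finsum_congr
  intro x
  have hrtop : (Set.range fun b : ↥(⊤ : AddSubgroup (Matrix (Fin d) (Fin (d-1))
        (O ⧸ IsLocalRing.maximalIdeal O ^ n))) =>
        vecMul x (b : Matrix (Fin d) (Fin (d-1)) (O ⧸ IsLocalRing.maximalIdeal O ^ n)))
      = Set.range (fun b : Matrix (Fin d) (Fin (d-1)) (O ⧸ IsLocalRing.maximalIdeal O ^ n) =>
        vecMul x b) := by
    ext y
    constructor
    · rintro ⟨b, rfl⟩
      exact ⟨(b : Matrix _ _ _), rfl⟩
    · rintro ⟨b, rfl⟩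
      exact ⟨⟨b, trivial⟩, rfl⟩
  rw [hrtop]
  have hcard : Nat.card (Set.range fun a : altGroup d (O ⧸ IsLocalRing.maximalIdeal O ^ n) =>
        vecMul x (a : Matrix (Fin d) (Fin d) (O ⧸ IsLocalRing.maximalIdeal O ^ n)))
      = Nat.card (Set.range
        (fun b : Matrix (Fin d) (Fin (d-1)) (O ⧸ IsLocalRing.maximalIdeal O ^ n) =>
        vecMul x b)) := by
    match d, x with
    | 0, x =>
      haveI : IsEmpty (Fin (0-1)) := ⟨fun i => absurd i.isLt (by omega)⟩
      have c1 : Nat.card (Set.range fun a : altGroup 0 (O ⧸ IsLocalRing.maximalIdeal O ^ n) =>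
          vecMul x (a : Matrix (Fin 0) (Fin 0) (O ⧸ IsLocalRing.maximalIdeal O ^ n))) = 1 :=
        Nat.card_eq_one_iff_unique.mpr ⟨inferInstance, ⟨⟨_, ⟨0, rfl⟩⟩⟩⟩
      have c2 : Nat.card (Set.range
          (fun b : Matrix (Fin 0) (Fin (0-1)) (O ⧸ IsLocalRing.maximalIdeal O ^ n) =>
          vecMul x b)) = 1 :=
        Nat.card_eq_one_iff_unique.mpr ⟨inferInstance, ⟨⟨_, ⟨0, rfl⟩⟩⟩⟩
      rw [c1, c2]
    | (m+1), x =>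
      obtain ⟨u, x', i0, hu, hx⟩ := exists_decomp (IsLocalRing.maximalIdeal O ^ n) x
        (fun f => exists_dvd_all f)
      exact card_range_core x x' u i0 hu hx
  rw [hcard]
end
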